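/- Let λ ∈ [0, 1/2), μ₁ ≠ μ₂ real with η = μ₂ − μ₁, let f ∈ L¹(ℝ), and define g(x) = λf(x−μ₁) + (1−λ)f(x−μ₂). Then the series (1/(1−λ)) Σ_{k=0}^∞ (−λ/(1−λ))^k g(· + μ₂ + kη) converges in L¹(ℝ) and its sum equals f; in particular, f(x) = (1/(1−λ)) Σ_{k=0}^∞ (−λ/(1−λ))^k g(x + μ₂ + kη) for Lebesgue-almost every x ∈ ℝ. -/

import Mathlib

open MeasureTheory Filter

/-- The inversion series converges in `L¹(ℝ)` to `f`, and hence the inversion formula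
holds for Lebesgue-almost every `x`. -/
theorem stmt_7 (lam mu₁ mu₂ : ℝ) (hlam : lam ∈ Set.Ico (0 : ℝ) (1 / 2)) (hmu : mu₁ ≠ mu₂)
    (f : ℝ → ℝ) (hf : Integrable f (volume : Measure ℝ))
    (g : ℝ → ℝ) (hg : ∀ x : ℝ, g x = lam * f (x - mu₁) + (1 - lam) * f (x - mu₂)) :
    Tendsto
      (fun ℓ : ℕ => ∫ x : ℝ,
        |(1 / (1 - lam)) * ∑ k ∈ Finset.range ℓ,
            (-lam / (1 - lam)) ^ k * g (x + mu₂ + (k : ℝ) * (mu₂ - mu₁)) - f x|)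
      atTop (nhds 0) ∧
    (∀ᵐ x : ℝ ∂(volume : Measure ℝ),
      f x = (1 / (1 - lam)) * ∑' k : ℕ,
        (-lam / (1 - lam)) ^ k * g (x + mu₂ + (k : ℝ) * (mu₂ - mu₁))) := by
  obtain ⟨hl0, hl2⟩ := hlam
  have h1l : (0:ℝ) < 1 - lam := by linarith
  simp only [neg_div]
  set η := mu₂ - mu₁ with hη
  set r := lam / (1 - lam) with hr
  set c := 1 / (1 - lam) with hc
  have hr0 : 0 ≤ r := div_nonneg hl0 h1l.le
  have hr1 : r < 1 := by
    rw [hr, div_lt_one h1l]; linarith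
  have hrl : r * (1 - lam) = lam := by
    rw [hr]; field_simp
  have hc1 : c * (1 - lam) = 1 := by
    rw [hc]; field_simp
  -- key telescoping identity
  have key : ∀ (x : ℝ) (ℓ : ℕ),
      c * (∑ k ∈ Finset.range ℓ, (-r) ^ k * g (x + mu₂ + (k : ℝ) * η)) - f x
      = -((-r) ^ ℓ * f (x + (ℓ : ℝ) * η)) := by
    intro x ℓ
    induction ℓ with
    | zero =>
      simp
    | succ n ih =>
      rw [Finset.sum_range_succ]
      have hg' : g (x + mu₂ + (n : ℝ) * η)
          = lam * f (x + ((n : ℝ) + 1) * η) + (1 - lam) * f (x + (n : ℝ) * η) := by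
        rw [hg]
        rw [show x + mu₂ + (n : ℝ) * η - mu₁ = x + ((n : ℝ) + 1) * η by rw [hη]; ring,
          show x + mu₂ + (n : ℝ) * η - mu₂ = x + (n : ℝ) * η by ring]
      rw [hg']
      push_cast
      linear_combination ih + ((-r) ^ n * f (x + ((n : ℝ)) * η)
          + r * (-r) ^ n * f (x + ((n : ℝ) + 1) * η)) * hc1
        + (-(c) * (-r) ^ n * f (x + ((n : ℝ) + 1) * η)) * hrl
  have hshift : ∀ a : ℝ, Integrable (fun x => f (x + a)) (volume : Measure ℝ) :=
    fun a => hf.comp_add_right a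
  constructor
  · -- L¹ convergence
    have hint : ∀ ℓ : ℕ,
        (∫ x : ℝ, |c * (∑ k ∈ Finset.range ℓ, (-r) ^ k * g (x + mu₂ + (k : ℝ) * η)) - f x|)
        = r ^ ℓ * ∫ x : ℝ, |f x| := by
      intro ℓ
      have : ∀ x : ℝ,
          |c * (∑ k ∈ Finset.range ℓ, (-r) ^ k * g (x + mu₂ + (k : ℝ) * η)) - f x|
          = r ^ ℓ * |f (x + (ℓ : ℝ) * η)| := by
        intro x
        rw [key x ℓ, abs_neg, abs_mul, abs_pow, abs_neg, abs_of_nonneg hr0]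
      simp_rw [this]
      rw [integral_const_mul, integral_add_right_eq_self (fun y => |f y|) ((ℓ : ℝ) * η)]
    rw [show (fun ℓ : ℕ => ∫ x : ℝ,
        |c * (∑ k ∈ Finset.range ℓ, (-r) ^ k * g (x + mu₂ + (k : ℝ) * η)) - f x|)
      = fun ℓ : ℕ => r ^ ℓ * ∫ x : ℝ, |f x| from funext hint]
    have := (tendsto_pow_atTop_nhds_zero_of_lt_one hr0 hr1).mul_const (∫ x : ℝ, |f x|)
    simpa using this
  · -- a.e. identity
    set u : ℕ → ℝ → ENNReal := fun k x => (ENNReal.ofReal r) ^ k * (‖f (x + (k : ℝ) * η)‖₊ : ENNReal)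
      with hu
    have humeas : ∀ k : ℕ, AEMeasurable (u k) (volume : Measure ℝ) := fun k =>
      ((hshift ((k : ℝ) * η)).aestronglyMeasurable.enorm).const_mul _
    have hulint : ∀ k : ℕ, ∫⁻ x : ℝ, u k x = (ENNReal.ofReal r) ^ k * ∫⁻ x : ℝ, (‖f x‖₊ : ENNReal) := by
      intro k
      rw [hu]
      rw [lintegral_const_mul' _ _ (by simp [ENNReal.ofReal_ne_top] : (ENNReal.ofReal r) ^ k ≠ ⊤),
        lintegral_add_right_eq_self (fun y => (‖f y‖₊ : ENNReal)) ((k : ℝ) * η)]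
    have hfin : ∫⁻ x : ℝ, ∑' k : ℕ, u k x ∂(volume : Measure ℝ) ≠ ⊤ := by
      rw [lintegral_tsum humeas]
      simp_rw [hulint]
      rw [ENNReal.tsum_mul_right, ENNReal.tsum_geometric]
      apply ENNReal.mul_ne_top
      · rw [ENNReal.inv_ne_top]
        exact (tsub_pos_of_lt (ENNReal.ofReal_lt_one.2 hr1)).ne'
      · exact hf.2.ne
    have hae : ∀ᵐ x : ℝ ∂(volume : Measure ℝ), ∑' k : ℕ, u k x < ⊤ :=
      ae_lt_top' (AEMeasurable.ennreal_tsum humeas) hfin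
    filter_upwards [hae] with x hx
    -- real summability of the dominating series
    have hs : Summable (fun k : ℕ => r ^ k * |f (x + (k : ℝ) * η)|) := by
      have := ENNReal.summable_toReal hx.ne
      convert this using 2 with k
      rw [hu]
      simp [ENNReal.toReal_mul, ENNReal.toReal_pow, ENNReal.toReal_ofReal hr0,
        Real.norm_eq_abs, abs_of_nonneg, coe_nnnorm]
    -- the tail tends to zero
    have h0 : Tendsto (fun ℓ : ℕ => (-r) ^ ℓ * f (x + (ℓ : ℝ) * η)) atTop (nhds 0) := by
      apply squeeze_zero_norm _ hs.tendsto_atTop_zero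
      intro ℓ
      rw [Real.norm_eq_abs, abs_mul, abs_pow, abs_neg, abs_of_nonneg hr0]
    -- summability of the series terms
    have hs' : Summable (fun k : ℕ => (-r) ^ k * g (x + mu₂ + (k : ℝ) * η)) := by
      apply Summable.of_norm_bounded
        (((hs.add ((summable_nat_add_iff 1).2 hs)).mul_left (1 - lam)))
      intro k
      have hg' : g (x + mu₂ + (k : ℝ) * η)
          = lam * f (x + ((k : ℝ) + 1) * η) + (1 - lam) * f (x + (k : ℝ) * η) := by
        rw [hg]
        rw [show x + mu₂ + (k : ℝ) * η - mu₁ = x + ((k : ℝ) + 1) * η by rw [hη]; ring,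
          show x + mu₂ + (k : ℝ) * η - mu₂ = x + (k : ℝ) * η by ring]
      rw [Real.norm_eq_abs, abs_mul, abs_pow, abs_neg, abs_of_nonneg hr0, hg']
      have h1 : |lam * f (x + ((k : ℝ) + 1) * η) + (1 - lam) * f (x + (k : ℝ) * η)|
          ≤ lam * |f (x + ((k : ℝ) + 1) * η)| + (1 - lam) * |f (x + (k : ℝ) * η)| := by
        calc _ ≤ |lam * f (x + ((k : ℝ) + 1) * η)| + |(1 - lam) * f (x + (k : ℝ) * η)| :=
              abs_add_le _ _
          _ = _ := by rw [abs_mul, abs_mul, abs_of_nonneg hl0, abs_of_nonneg h1l.le]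
      have hb : r ^ k * (lam * |f (x + ((k : ℝ) + 1) * η)| + (1 - lam) * |f (x + (k : ℝ) * η)|)
          = (1 - lam) * (r ^ k * |f (x + (k : ℝ) * η)|
              + r ^ (k + 1) * |f (x + ((k + 1 : ℕ) : ℝ) * η)|) := by
        push_cast
        rw [pow_succ]
        linear_combination (-(r ^ k * |f (x + ((k : ℝ) + 1) * η)|)) * hrl
      calc r ^ k * |lam * f (x + ((k : ℝ) + 1) * η) + (1 - lam) * f (x + (k : ℝ) * η)|
          ≤ r ^ k * (lam * |f (x + ((k : ℝ) + 1) * η)| + (1 - lam) * |f (x + (k : ℝ) * η)|) :=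
            mul_le_mul_of_nonneg_left h1 (pow_nonneg hr0 k)
        _ = _ := hb
    -- partial sums tend to (1 - lam) * f x
    have hP : Tendsto (fun ℓ : ℕ => ∑ k ∈ Finset.range ℓ, (-r) ^ k * g (x + mu₂ + (k : ℝ) * η))
        atTop (nhds ((1 - lam) * f x)) := by
      have hPe : ∀ ℓ : ℕ, ∑ k ∈ Finset.range ℓ, (-r) ^ k * g (x + mu₂ + (k : ℝ) * η)
          = (1 - lam) * f x - (1 - lam) * ((-r) ^ ℓ * f (x + (ℓ : ℝ) * η)) := by
        intro ℓ
        have := key x ℓ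
        linear_combination (1 - lam) * this
          - (∑ k ∈ Finset.range ℓ, (-r) ^ k * g (x + mu₂ + (k : ℝ) * η)) * hc1
      rw [show (fun ℓ : ℕ => ∑ k ∈ Finset.range ℓ, (-r) ^ k * g (x + mu₂ + (k : ℝ) * η))
        = fun ℓ : ℕ => (1 - lam) * f x - (1 - lam) * ((-r) ^ ℓ * f (x + (ℓ : ℝ) * η))
        from funext hPe]
      have h2 : Tendsto
          (fun ℓ : ℕ => (1 - lam) * f x - (1 - lam) * ((-r) ^ ℓ * f (x + (ℓ : ℝ) * η)))
          atTop (nhds ((1 - lam) * f x - (1 - lam) * 0)) :=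
        tendsto_const_nhds.sub (h0.const_mul (1 - lam))
      simpa using h2
    have hT : (∑' k : ℕ, (-r) ^ k * g (x + mu₂ + (k : ℝ) * η)) = (1 - lam) * f x := by
      have h1 := (hs'.hasSum_iff_tendsto_nat).1 hs'.hasSum
      exact tendsto_nhds_unique h1 hP
    rw [hT]
    linear_combination (-(f x)) * hc1
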